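/- For rings R_1, …, R_n, the product ring R_1 × ⋯ × R_n is NIP if and only if each R_i is NIP. -/

import Mathlib

open FirstOrder Filter

/-- A ring `M`, regarded as a structure in the first-order language of rings, is NIP if for
every formula `φ(x̄; ȳ)` (with the free variables partitioned into `x̄` and `ȳ`) there is an
`N ∈ ℕ` such that `φ` shatters no `N`-element family in `M`: there are no tuples
`a 1, …, a N` and `(b S)_{S ⊆ {1,…,N}}` from `M` with `M ⊨ φ(a i, b S)` iff `i ∈ S`. -/
def IsNIPRing (M : Type*) [Ring M] : Prop :=
  letI := FirstOrder.Ring.compatibleRingOfRing M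
  ∀ (n m : ℕ) (φ : Language.ring.Formula ((Fin n) ⊕ (Fin m))),
    ∃ N : ℕ,
      ¬∃ (a : Fin N → Fin n → M) (b : Set (Fin N) → Fin m → M),
        ∀ (i : Fin N) (S : Set (Fin N)),
          φ.Realize (Sum.elim (a i) (b S)) ↔ i ∈ S

namespace IsNIPRingAux

open FirstOrder Language Ring

attribute [local instance] FirstOrder.Ring.compatibleRingOfRing

/-! ### Pure logic lemmas -/

theorem regroup_iff {J : Type*} {n : ℕ} {B : J → Fin n → Prop} (f : J → Fin n) :
    (∀ i, ∀ j, f j = i → B j i) ↔ ∀ j, B j (f j) :=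
  ⟨fun h j => h (f j) j rfl, fun h i j hf => hf ▸ h j⟩

theorem logic_imp {J₁ J₂ : Type*} {n : ℕ} (P₁ : J₁ → Fin n → Prop) (P₂ : J₂ → Fin n → Prop) :
    ((∃ j, ∀ i, P₁ j i) → (∃ j, ∀ i, P₂ j i)) ↔
      ((∃ f : J₁ → Fin n, ∀ j, ¬ P₁ j (f j)) ∨ ∃ j, ∀ i, P₂ j i) := by
  rw [imp_iff_not_or]
  apply or_congr_left
  constructor
  · intro h
    have h' : ∀ j, ∃ i, ¬ P₁ j i := by push_neg at h; exact h
    exact Classical.skolem.mp h'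
  · rintro ⟨f, hf⟩ ⟨j, hj⟩
    exact hf j (hj (f j))

theorem logic_all {J : Type*} {n : ℕ} {R : Fin n → Type*}
    (A : J → (i : Fin n) → R i → Prop) :
    (∀ x : (∀ i, R i), ∃ j, ∀ i, A j i (x i)) ↔
      ∃ g : (J → Fin n) → Fin n, ∀ f : J → Fin n,
        ¬ ∃ y : R (g f), ∀ j, f j = g f → ¬ A j (g f) y := by
  rw [← Classical.skolem (p := fun (f : J → Fin n) (i : Fin n) =>
    ¬ ∃ y : R i, ∀ j, f j = i → ¬ A j i y)]
  constructor
  · intro h f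
    by_contra hf
    push_neg at hf
    choose x hx using fun i => (hf i)
    obtain ⟨j, hj⟩ := h x
    exact hx (f j) j rfl (hj (f j))
  · intro h x
    by_contra hx
    push_neg at hx
    choose f hf using hx
    obtain ⟨i, hi⟩ := h f
    exact hi ⟨x i, fun j hj => hj ▸ hf j⟩

/-! ### Combinatorial counting lemmas -/

theorem card_small_finsets (N d : ℕ) :
    (Finset.univ.filter fun s : Finset (Fin N) => s.card < d).card ≤ (N + 1) ^ d := by
  classical
  have hsurj : Set.SurjOn (fun f : Fin d → Option (Fin N) =>
      Finset.univ.filter fun x => ∃ j, f j = some x)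
      (Finset.univ : Finset (Fin d → Option (Fin N)))
      (Finset.univ.filter fun s : Finset (Fin N) => s.card < d) := by
    intro s hs
    simp only [Finset.coe_filter, Finset.mem_univ, true_and, Set.mem_setOf_eq] at hs
    refine ⟨fun j : Fin d => (s.sort (· ≤ ·))[(j : ℕ)]?, by simp, ?_⟩
    simp only
    ext x
    simp only [Finset.mem_filter, Finset.mem_univ, true_and]
    constructor
    · rintro ⟨j, hj⟩
      have hx : x ∈ s.sort (· ≤ ·) := by
        have := List.getElem?_eq_some_iff.mp hj
        obtain ⟨hlt, hget⟩ := this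
        exact hget ▸ List.getElem_mem hlt
      exact (Finset.mem_sort _).1 hx
    · intro hx
      have hx' : x ∈ s.sort (· ≤ ·) := (Finset.mem_sort _).2 hx
      obtain ⟨jj, hjj, hget⟩ := List.getElem_of_mem hx'
      have hlen : (s.sort (· ≤ ·)).length = s.card := Finset.length_sort _
      refine ⟨⟨jj, by omega⟩, ?_⟩
      simpa [List.getElem?_eq_getElem hjj] using hget
  have hle := Finset.card_le_card_of_surjOn _ hsurj
  calc (Finset.univ.filter fun s : Finset (Fin N) => s.card < d).card
      ≤ (Finset.univ : Finset (Fin d → Option (Fin N))).card := hle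
    _ = (N + 1) ^ d := by
        simp [Finset.card_univ]

theorem shatter_bound {N : ℕ} (F : Finset (Finset (Fin N))) {d' d : ℕ} (hd : d' ≤ d)
    (hF : ∀ s : Finset (Fin N), s.card = d' → ¬ F.Shatters s) :
    F.card ≤ (N + 1) ^ d := by
  classical
  refine le_trans (Finset.card_le_card_shatterer F)
    (le_trans (Finset.card_le_card ?_) (card_small_finsets N d))
  intro s hs
  rw [Finset.mem_shatterer] at hs
  simp only [Finset.mem_filter, Finset.mem_univ, true_and]
  by_contra hlt
  push_neg at hlt
  obtain ⟨t, hts, htc⟩ := Finset.exists_subset_card_eq (le_trans hd hlt)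
  exact hF t htc (hs.mono_right hts)

theorem pow_aux (D : ℕ) :
    ((D + 1) * 2 ^ (D + 1) + 1) ^ D < 2 ^ ((D + 1) * 2 ^ (D + 1)) := by
  have h2 : D + 2 ≤ 2 ^ (D + 1) := Nat.succ_le_of_lt (Nat.lt_two_pow_self (n := D + 1))
  have h1 : (D + 1) * 2 ^ (D + 1) + 1 ≤ 2 ^ (2 * D + 2) := by
    calc (D + 1) * 2 ^ (D + 1) + 1 ≤ (D + 1) * 2 ^ (D + 1) + 2 ^ (D + 1) := by
          have : (1 : ℕ) ≤ 2 ^ (D + 1) := Nat.one_le_two_pow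
          omega
      _ = (D + 2) * 2 ^ (D + 1) := by ring
      _ ≤ 2 ^ (D + 1) * 2 ^ (D + 1) := Nat.mul_le_mul_right _ h2
      _ = 2 ^ (2 * D + 2) := by rw [← pow_add]; ring_nf
  have hexp : (2 * D + 2) * D < (D + 1) * 2 ^ (D + 1) := by
    have hD : D < 2 ^ D := Nat.lt_two_pow_self
    have : 2 ^ (D + 1) = 2 * 2 ^ D := by ring
    nlinarith [hD]
  calc ((D + 1) * 2 ^ (D + 1) + 1) ^ D ≤ (2 ^ (2 * D + 2)) ^ D :=
        Nat.pow_le_pow_left h1 D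
    _ = 2 ^ ((2 * D + 2) * D) := by rw [← pow_mul]
    _ < 2 ^ ((D + 1) * 2 ^ (D + 1)) := Nat.pow_lt_pow_right one_lt_two hexp

/-! ### Componentwise realization of terms in products -/

section Pi

variable {n : ℕ} {R : Fin n → Type*} [∀ i, Ring (R i)]

theorem term_realize_pi {α : Type*} (t : Language.ring.Term α) (v : α → ∀ i, R i) (i : Fin n) :
    t.realize v i = t.realize (fun a => v a i) := by
  induction t with
  | var a => rfl
  | func f ts ih =>
    cases f <;> simp [Term.realize, ih]

theorem sumElim_proj {α β : Type*} (v : α → ∀ i, R i) (xs : β → ∀ i, R i) (i : Fin n) :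
    (fun z => Sum.elim v xs z i) = Sum.elim (fun a => v a i) (fun x => xs x i) := by
  funext z; cases z <;> rfl

theorem snoc_proj {k : ℕ} (xs : Fin k → ∀ i, R i) (x : ∀ i, R i) (i : Fin n) :
    (fun z => (Fin.snoc (α := fun _ => ∀ i, R i) xs x) z i)
      = Fin.snoc (α := fun _ => R i) (fun z => xs z i) (x i) := by
  funext z
  refine Fin.lastCases ?_ ?_ z
  · simp
  · intro z; simp

theorem term_key {α : Type*} {k : ℕ} (v : α → ∀ i, R i) (xs : Fin k → ∀ i, R i)
    (t : Language.ring.Term (α ⊕ Fin k)) (i : Fin n) :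
    Term.realize (Sum.elim v xs) t i
      = Term.realize (Sum.elim (fun a => v a i) fun x => xs x i) t := by
  rw [term_realize_pi, sumElim_proj]

/-! ### Feferman–Vaught for finite products -/

theorem fv {α : Type*} {k : ℕ} (φ : Language.ring.BoundedFormula α k) :
    ∃ (J : Type) (_ : Fintype J) (c : J → Fin n → Language.ring.BoundedFormula α k),
      ∀ (v : α → ∀ i, R i) (xs : Fin k → ∀ i, R i),
        φ.Realize v xs ↔
          ∃ j, ∀ i, (c j i).Realize (fun a => v a i) (fun x => xs x i) := by
  induction φ with
  | falsum =>
    exact ⟨Empty, inferInstance, fun j => j.elim,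
      fun v xs => ⟨fun h => h.elim, fun ⟨j, _⟩ => j.elim⟩⟩
  | equal t₁ t₂ =>
    refine ⟨PUnit, inferInstance, fun _ i => BoundedFormula.equal t₁ t₂, fun v xs => ?_⟩
    constructor
    · intro h
      refine ⟨PUnit.unit, fun i => ?_⟩
      show Term.realize (Sum.elim (fun a => v a i) fun x => xs x i) t₁
          = Term.realize (Sum.elim (fun a => v a i) fun x => xs x i) t₂
      rw [← term_key, ← term_key]
      exact congrFun h i
    · rintro ⟨_, h⟩
      show Term.realize (Sum.elim v xs) t₁ = Term.realize (Sum.elim v xs) t₂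
      funext i
      rw [term_key v xs t₁ i, term_key v xs t₂ i]
      exact h i
  | rel r ts => exact isEmptyElim r
  | imp φ₁ φ₂ ih₁ ih₂ =>
    classical
    obtain ⟨J₁, hJ₁, c₁, h₁⟩ := ih₁
    obtain ⟨J₂, hJ₂, c₂, h₂⟩ := ih₂
    letI := hJ₁; letI := hJ₂
    refine ⟨(J₁ → Fin n) ⊕ J₂, inferInstance,
      Sum.elim
        (fun f i => BoundedFormula.iInf
          (fun j : {j // f j = i} => (c₁ j.1 i).not))
        (fun j i => c₂ j i), fun v xs => ?_⟩
    rw [BoundedFormula.realize_imp, h₁ v xs, h₂ v xs, logic_imp]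
    rw [Sum.exists]
    apply or_congr _ Iff.rfl
    apply exists_congr; intro f
    simp only [Sum.elim_inl, BoundedFormula.realize_iInf, Finset.mem_filter, Finset.mem_univ,
      true_and, BoundedFormula.realize_not, Subtype.forall]
    exact (regroup_iff (B := fun j i =>
      ¬ (c₁ j i).Realize (fun a => v a i) (fun x => xs x i)) f).symm
  | all φ ih =>
    classical
    obtain ⟨J, hJ, c, h⟩ := ih
    letI := hJ
    refine ⟨(J → Fin n) → Fin n, inferInstance,
      fun g i => BoundedFormula.iInf
        (fun f : {f // g f = i} => ((BoundedFormula.iInf (fun j : {j // f.1 j = i} =>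
          (c j i).not)).ex).not), fun v xs => ?_⟩
    rw [BoundedFormula.realize_all]
    have h' : ∀ x : (∀ i, R i), φ.Realize v (Fin.snoc xs x) ↔
        ∃ j, ∀ i, (c j i).Realize (fun a => v a i)
          (Fin.snoc (fun z => xs z i) (x i)) := by
      intro x
      rw [h]
      simp only [snoc_proj]
    simp only [h']
    rw [logic_all (A := fun j i y => (c j i).Realize (fun a => v a i)
      (Fin.snoc (fun z => xs z i) y))]
    apply exists_congr; intro g
    simp only [BoundedFormula.realize_iInf, BoundedFormula.realize_not,
      BoundedFormula.realize_ex, Finset.mem_filter, Finset.mem_univ, true_and, Subtype.forall]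
    exact (regroup_iff (B := fun f i => ¬ ∃ y : R i,
      ∀ j, f j = i → ¬ (c j i).Realize (fun a => v a i)
        (Fin.snoc (fun z => xs z i) y)) g).symm

/-! ### Relativization of a formula to one coordinate -/

def relToCoord {α : Type*} (ε : α) :
    ∀ {k : ℕ}, Language.ring.BoundedFormula α k → Language.ring.BoundedFormula α k
  | _, .falsum => .falsum
  | _, .equal t₁ t₂ =>
      .equal (Term.var (Sum.inl ε) * t₁) (Term.var (Sum.inl ε) * t₂)
  | _, .rel r _ => isEmptyElim r
  | _, .imp φ₁ φ₂ => .imp (relToCoord ε φ₁) (relToCoord ε φ₂)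
  | _, .all φ => .all (relToCoord ε φ)

theorem realize_relToCoord {α : Type*} {ε : α} {i : Fin n} {k : ℕ}
    (ψ : Language.ring.BoundedFormula α k) :
    ∀ (v : α → ∀ i', R i') (xs : Fin k → ∀ i', R i'), v ε = Pi.single i 1 →
      ((relToCoord ε ψ).Realize v xs ↔
        ψ.Realize (fun a => v a i) (fun z => xs z i)) := by
  induction ψ with
  | falsum => exact fun v xs hv => Iff.rfl
  | equal t₁ t₂ =>
    intro v xs hv
    show (Term.realize (Sum.elim v xs) ((Term.var (Sum.inl ε) : Language.ring.Term _) * t₁)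
        = Term.realize (Sum.elim v xs) ((Term.var (Sum.inl ε) : Language.ring.Term _) * t₂)) ↔
      (Term.realize (Sum.elim (fun a => v a i) fun z => xs z i) t₁
        = Term.realize (Sum.elim (fun a => v a i) fun z => xs z i) t₂)
    rw [realize_mul, realize_mul]
    have hε : Term.realize (Sum.elim v xs)
        (Term.var (Sum.inl ε) : Language.ring.Term _) = Pi.single i 1 := hv
    rw [hε]
    constructor
    · intro h
      have hi := congrFun h i
      simpa [Pi.single_eq_same, term_key v xs t₁ i, term_key v xs t₂ i] using hi
    · intro h
      funext j
      by_cases hj : j = i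
      · subst hj
        simp only [Pi.mul_apply, Pi.single_eq_same, one_mul, term_key v xs t₁ j,
          term_key v xs t₂ j]
        exact h
      · simp [Pi.mul_apply, Pi.single_eq_of_ne hj]
  | rel r ts => exact isEmptyElim r
  | imp φ₁ φ₂ ih₁ ih₂ =>
    intro v xs hv
    show (BoundedFormula.imp _ _).Realize v xs ↔ _
    rw [BoundedFormula.realize_imp, BoundedFormula.realize_imp,
      ih₁ v xs hv, ih₂ v xs hv]
  | all φ ihφ =>
    intro v xs hv
    show (BoundedFormula.all _).Realize v xs ↔ _
    rw [BoundedFormula.realize_all, BoundedFormula.realize_all]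
    constructor
    · intro h y
      have := (ihφ v (Fin.snoc xs (Pi.single i y)) hv).mp (h (Pi.single i y))
      rw [snoc_proj] at this
      simpa [Pi.single_eq_same] using this
    · intro h x
      refine (ihφ v (Fin.snoc xs x) hv).mpr ?_
      rw [snoc_proj]
      exact h (x i)

/-! ### The two directions -/

theorem factor_nip (h : IsNIPRing (∀ i, R i)) (i : Fin n) : IsNIPRing (R i) := by
  classical
  intro n' m φ
  obtain ⟨N, hN⟩ := h n' (m + 1)
    (relToCoord (Sum.inr (Fin.last m))
      ((φ.relabel (Sum.map id Fin.castSucc) : Language.ring.Formula (Fin n' ⊕ Fin (m + 1)))))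
  refine ⟨N, ?_⟩
  rintro ⟨a, b, hab⟩
  apply hN
  refine ⟨fun k z => Pi.single i (a k z),
    fun S => Fin.snoc (fun z => Pi.single i (b S z)) (Pi.single i (1 : R i)), fun k S => ?_⟩
  set v : (Fin n' ⊕ Fin (m + 1)) → ∀ i', R i' :=
    Sum.elim (fun z => Pi.single i (a k z))
      (Fin.snoc (fun z => Pi.single i (b S z)) (Pi.single i (1 : R i))) with hvdef
  have hv : v (Sum.inr (Fin.last m)) = Pi.single i 1 := by
    simp [hvdef, Fin.snoc_last]
  have step1 := realize_relToCoord (R := R)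
    (φ.relabel (Sum.map id Fin.castSucc) : Language.ring.Formula (Fin n' ⊕ Fin (m + 1)))
    v default hv
  have step2 : (φ.relabel (Sum.map id Fin.castSucc) :
        Language.ring.Formula (Fin n' ⊕ Fin (m + 1))).Realize (fun z => v z i) ↔
      φ.Realize ((fun z => v z i) ∘ Sum.map id Fin.castSucc) :=
    Formula.realize_relabel
  have step3 : ((fun z => v z i) ∘ Sum.map id Fin.castSucc) = Sum.elim (a k) (b S) := by
    funext z
    cases z with
    | inl z => simp [hvdef]
    | inr z => simp [hvdef, Fin.snoc_castSucc]
  have step4 : (fun z : Fin 0 => (default : Fin 0 → ∀ i', R i') z i)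
      = (default : Fin 0 → R i) := Subsingleton.elim _ _
  rw [step4] at step1
  calc Formula.Realize (relToCoord (Sum.inr (Fin.last m))
        ((φ.relabel (Sum.map id Fin.castSucc) :
          Language.ring.Formula (Fin n' ⊕ Fin (m + 1))))) v
      ↔ Formula.Realize (φ.relabel (Sum.map id Fin.castSucc) :
          Language.ring.Formula (Fin n' ⊕ Fin (m + 1))) (fun z => v z i) := step1
    _ ↔ φ.Realize ((fun z => v z i) ∘ Sum.map id Fin.castSucc) := step2
    _ ↔ φ.Realize (Sum.elim (a k) (b S)) := by rw [step3]
    _ ↔ k ∈ S := hab k S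

theorem pi_nip (h : ∀ i, IsNIPRing (R i)) : IsNIPRing (∀ i, R i) := by
  classical
  intro n' m φ
  obtain ⟨J, instJ, c, hc⟩ := fv (n := n) (R := R) (φ : Language.ring.BoundedFormula _ 0)
  letI := instJ
  choose NB hNB using fun p : J × Fin n => h p.2 n' m (c p.1 p.2)
  set d := Finset.univ.sup NB with hd
  set K := Fintype.card (J × Fin n) with hK
  set D := d * K with hD
  refine ⟨(D + 1) * 2 ^ (D + 1), ?_⟩
  set N := (D + 1) * 2 ^ (D + 1) with hN
  rintro ⟨a, b, hab⟩
  have hc' : ∀ (k : Fin N) (q : Fin m → ∀ i', R i'),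
      φ.Realize (Sum.elim (a k) q) ↔
        ∃ j, ∀ i, (c j i).Realize (fun z => Sum.elim (a k) q z i)
          (default : Fin 0 → R i) := by
    intro k q
    have := hc (Sum.elim (a k) q) default
    have e : ∀ i : Fin n, (fun x : Fin 0 => (default : Fin 0 → ∀ i', R i') x i)
        = (default : Fin 0 → R i) := fun i => Subsingleton.elim _ _
    simp only [e] at this
    exact this
  set tr : (J × Fin n) → (Fin m → ∀ i', R i') → Finset (Fin N) := fun p q =>
    Finset.univ.filter fun k =>
      (c p.1 p.2).Realize (fun z => Sum.elim (a k) q z p.2) (default : Fin 0 → R p.2)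
    with htr
  set F : (J × Fin n) → Finset (Finset (Fin N)) := fun p =>
    Finset.univ.filter fun s => ∃ q, s = tr p q with hF
  have hFcard : ∀ p, (F p).card ≤ (N + 1) ^ d := by
    intro p
    refine shatter_bound _ (Finset.le_sup (Finset.mem_univ p)) ?_
    intro s hs hshat
    apply hNB p
    -- build a shattered family in `R p.2`
    have hmem : ∀ l : Fin (NB p), ((s.equivFin.symm (Fin.cast hs.symm l) : {x // x ∈ s}) :
        Fin N) ∈ s := fun l => (s.equivFin.symm (Fin.cast hs.symm l)).2
    set e : Fin (NB p) → Fin N := fun l =>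
      ((s.equivFin.symm (Fin.cast hs.symm l) : {x // x ∈ s}) : Fin N) with he
    have hei : Function.Injective e := by
      intro l₁ l₂ hl
      have h1 := Subtype.val_injective hl
      have h2 := s.equivFin.symm.injective h1
      exact Fin.val_injective (by simpa using congrArg Fin.val h2)
    have key : ∀ S' : Set (Fin (NB p)), ∃ q : Fin m → R p.2,
        ∀ l : Fin (NB p),
          ((c p.1 p.2).Realize (Sum.elim (fun z => a (e l) z p.2) q)
            (default : Fin 0 → R p.2) ↔ l ∈ S') := by
      intro S'
      set t : Finset (Fin N) := (Finset.univ.filter fun l => l ∈ S').image e with ht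
      have hts : t ⊆ s := by
        intro x hx
        rw [ht, Finset.mem_image] at hx
        obtain ⟨l, _, rfl⟩ := hx
        exact hmem l
      obtain ⟨u, hu, hsu⟩ := hshat hts
      rw [hF, Finset.mem_filter] at hu
      obtain ⟨-, q, rfl⟩ := hu
      refine ⟨fun z => q z p.2, fun l => ?_⟩
      have h1 : Sum.elim (fun z => a (e l) z p.2) (fun z => q z p.2)
          = fun z => Sum.elim (a (e l)) q z p.2 := by
        funext z; cases z <;> rfl
      rw [h1]
      have h2 : (c p.1 p.2).Realize (fun z => Sum.elim (a (e l)) q z p.2)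
          (default : Fin 0 → R p.2) ↔ e l ∈ tr p q := by
        rw [htr]; simp
      rw [h2]
      have h3 : e l ∈ tr p q ↔ e l ∈ t := by
        rw [← hsu]
        simp [Finset.mem_inter, hmem l]
        exact fun _ => hmem l
      rw [h3, ht, Finset.mem_image]
      constructor
      · rintro ⟨l', hl', hel⟩
        have : l' = l := hei hel
        subst this
        simpa using hl'
      · intro hl
        exact ⟨l, by simpa using hl, rfl⟩
    choose bq hbq using key
    exact ⟨fun l z => a (e l) z p.2, bq, fun l S' => hbq S' l⟩
  -- injection from subsets into trace profiles
  have hΦmem : ∀ (S : Finset (Fin N)) (p : J × Fin n), tr p (b ↑S) ∈ F p := by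
    intro S p
    rw [hF, Finset.mem_filter]
    exact ⟨Finset.mem_univ _, ⟨b ↑S, rfl⟩⟩
  set Φ : Finset (Fin N) → ∀ p : J × Fin n, {s // s ∈ F p} := fun S p =>
    ⟨tr p (b ↑S), hΦmem S p⟩ with hΦ
  have keymem : ∀ (S : Finset (Fin N)) (k : Fin N),
      k ∈ S ↔ ∃ j, ∀ i, k ∈ (Φ S (j, i) : Finset (Fin N)) := by
    intro S k
    have h1 : k ∈ S ↔ k ∈ (↑S : Set (Fin N)) := (Finset.mem_coe).symm
    rw [h1, ← hab k ↑S, hc' k (b ↑S)]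
    apply exists_congr; intro j
    apply forall_congr'; intro i
    rw [hΦ]
    simp [htr]
  have hΦinj : Function.Injective Φ := by
    intro S₁ S₂ hS
    ext k
    rw [keymem S₁ k, keymem S₂ k, hS]
  have hcard := Fintype.card_le_of_injective Φ hΦinj
  have hcard1 : Fintype.card (Finset (Fin N)) = 2 ^ N := by
    rw [Fintype.card_finset, Fintype.card_fin]
  have hcard2 : Fintype.card (∀ p : J × Fin n, {s // s ∈ F p})
      = ∏ p : J × Fin n, (F p).card := by
    rw [Fintype.card_pi]
    exact Finset.prod_congr rfl fun p _ => Fintype.card_coe _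
  have hcard3 : ∏ p : J × Fin n, (F p).card ≤ (N + 1) ^ D := by
    calc ∏ p : J × Fin n, (F p).card ≤ ∏ _p : J × Fin n, (N + 1) ^ d :=
          Finset.prod_le_prod' fun p _ => hFcard p
      _ = ((N + 1) ^ d) ^ K := by rw [Finset.prod_const, Finset.card_univ]
      _ = (N + 1) ^ D := by rw [← pow_mul]
  have : (2 : ℕ) ^ N ≤ (N + 1) ^ D := by
    rw [← hcard1]
    exact le_trans hcard (le_trans (le_of_eq hcard2) hcard3)
  have hcontra := pow_aux D
  rw [← hN] at hcontra
  omega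

end Pi

end IsNIPRingAux

/-- For rings `R 1, …, R n`, the product ring `R 1 × ⋯ × R n` is NIP if and only if each
`R i` is NIP. -/
theorem isNIPRing_pi_iff (n : ℕ) (R : Fin n → Type*) [∀ i, Ring (R i)] :
    IsNIPRing (∀ i, R i) ↔ ∀ i, IsNIPRing (R i) :=
  ⟨fun h i => IsNIPRingAux.factor_nip h i, fun h => IsNIPRingAux.pi_nip h⟩
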